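/- arXiv:2401.11422 — 8 statements merged into one kernel-verified Lean document; each statement's English description precedes it below -/
import Mathlib

section
/- Let U ⊂ ℝ^p be convex open and q : U → ℝ^p be differentiable with symmetric positive definite derivative everywhere. Then q is strictly cyclically monotone: for any points u¹,…,u^k ∈ U with u^{k+1} := u¹, one has ∑_{i=1}^k (u^{i+1} - u^i)ᵀ q(u^{i}) ≤ 0 (equivalently ∑ (u^{i+1})ᵀ(q(u^{i+1}) - q(u^i)) ≥ 0), with strict inequality unless u¹ = ⋯ = u^k. -/
open scoped RealInnerProductSpace
open MeasureTheory Set intervalIntegral ContinuousLinearMap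

set_option linter.unusedSectionVars false
set_option linter.unusedVariables false
set_option maxHeartbeats 1000000

namespace Stmt1Aux

variable {E : Type*} [NormedAddCommGroup E] [InnerProductSpace ℝ E] [CompleteSpace E]


noncomputable def segInt (q : E → E) (a b : E) : ℝ :=
  ∫ t in (0:ℝ)..1, ⟪q (a + t • (b - a)), b - a⟫

theorem segInt_triangle {U : Set E} (hUconv : Convex ℝ U) (hUopen : IsOpen U)
    {q : E → E} (hdiff : ∀ u ∈ U, DifferentiableAt ℝ q u)
    (hsym : ∀ u ∈ U, ∀ v w : E, ⟪fderiv ℝ q u v, w⟫ = ⟪v, fderiv ℝ q u w⟫)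
    {a b c : E} (ha : a ∈ U) (hb : b ∈ U) (hc : c ∈ U) :
    segInt q a c = segInt q a b + segInt q b c := by
  set v : E := b - a with hv
  set w : E := c - b with hw
  set X : ℝ × ℝ → E := fun z => a + z.1 • v + (z.1 * z.2) • w with hX
  set DX : ℝ × ℝ → (ℝ × ℝ →L[ℝ] E) := fun z =>
    (fst ℝ ℝ ℝ).smulRight v + (z.1 • snd ℝ ℝ ℝ + z.2 • fst ℝ ℝ ℝ).smulRight w with hDX
  have hXd : ∀ z : ℝ × ℝ, HasFDerivAt X (DX z) z := by
    intro z
    exact (((hasFDerivAt_fst.smul_const v).const_add a).add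
      ((hasFDerivAt_fst.mul hasFDerivAt_snd).smul_const w))
  have hXmem : ∀ z ∈ Icc ((0,0) : ℝ × ℝ) (1,1), X z ∈ U := by
    rintro ⟨s, t⟩ hz
    rw [Set.mem_Icc] at hz
    obtain ⟨⟨hs0, ht0⟩, hs1, ht1⟩ := hz
    have hbt : b + t • (c - b) ∈ U :=
      hUconv.add_smul_sub_mem hb hc ⟨ht0, ht1⟩
    have : X (s, t) = a + s • ((b + t • (c - b)) - a) := by
      simp only [hX, hv, hw]
      module
    rw [this]
    exact hUconv.add_smul_sub_mem ha hbt ⟨hs0, hs1⟩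
  -- components of the 1-form pulled back
  set Q : ℝ × ℝ → ℝ := fun z => ⟪q (X z), z.1 • w⟫ with hQ
  set P : ℝ × ℝ → ℝ := fun z => ⟪q (X z), v + z.2 • w⟫ with hP
  set Q' : ℝ × ℝ → (ℝ × ℝ →L[ℝ] ℝ) := fun z =>
    (fderivInnerCLM ℝ (q (X z), z.1 • w)).comp
      (((fderiv ℝ q (X z)).comp (DX z)).prod ((fst ℝ ℝ ℝ).smulRight w)) with hQ'
  set P' : ℝ × ℝ → (ℝ × ℝ →L[ℝ] ℝ) := fun z =>
    (fderivInnerCLM ℝ (q (X z), v + z.2 • w)).comp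
      (((fderiv ℝ q (X z)).comp (DX z)).prod ((snd ℝ ℝ ℝ).smulRight w)) with hP'
  have hQd : ∀ z, X z ∈ U → HasFDerivAt Q (Q' z) z := by
    intro z hzU
    exact HasFDerivAt.inner ℝ (((hdiff _ hzU).hasFDerivAt).comp z (hXd z))
      (hasFDerivAt_fst.smul_const w)
  have hPd : ∀ z, X z ∈ U → HasFDerivAt P (P' z) z := by
    intro z hzU
    exact HasFDerivAt.inner ℝ (((hdiff _ hzU).hasFDerivAt).comp z (hXd z))
      ((hasFDerivAt_snd.smul_const w).const_add v)
  have hkey : ∀ z ∈ Icc ((0,0) : ℝ × ℝ) (1,1), Q' z (1, 0) + (-(P' z)) (0, 1) = 0 := by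
    intro z hz
    have hzU := hXmem z hz
    have e1 : DX z (1, 0) = v + z.2 • w := by
      simp [hDX]
    have e2 : DX z (0, 1) = z.1 • w := by
      simp [hDX]
    simp only [hQ', hP', ContinuousLinearMap.neg_apply, ContinuousLinearMap.comp_apply,
      ContinuousLinearMap.prod_apply, fderivInnerCLM_apply, ContinuousLinearMap.smulRight_apply,
      ContinuousLinearMap.coe_fst', ContinuousLinearMap.coe_snd', e1, e2]
    have hs := hsym _ hzU (v + z.2 • w) (z.1 • w)
    linarith [hs, real_inner_comm ((fderiv ℝ q (X z)) (z.1 • w)) (v + z.2 • w)]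
  have hXcont : Continuous X := by
    simp only [hX]; fun_prop
  have hqXcont : ContinuousOn (fun z : ℝ × ℝ => q (X z)) (Icc ((0,0) : ℝ × ℝ) (1,1)) := by
    intro z hz
    have h2 : ContinuousAt q (X z) := (hdiff _ (hXmem z hz)).continuousAt
    have h3 : ContinuousAt (fun z : ℝ × ℝ => q (X z)) z := by
      exact h2.comp (f := X) hXcont.continuousAt
    exact h3.continuousWithinAt
  have hQc : ContinuousOn Q (Icc ((0,0) : ℝ × ℝ) (1,1)) :=
    hqXcont.inner ((continuous_fst.smul continuous_const).continuousOn)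
  have hPc : ContinuousOn P (Icc ((0,0) : ℝ × ℝ) (1,1)) :=
    hqXcont.inner ((continuous_const.add (continuous_snd.smul continuous_const)).continuousOn)
  have hmemIcc : ∀ z ∈ Ioo (0:ℝ) 1 ×ˢ Ioo (0:ℝ) 1 \ (∅ : Set (ℝ × ℝ)),
      z ∈ Icc ((0,0) : ℝ × ℝ) (1,1) := by
    rintro ⟨s, t⟩ ⟨⟨h1, h2⟩, -⟩
    exact ⟨⟨h1.1.le, h2.1.le⟩, h1.2.le, h2.2.le⟩
  have hgreen := MeasureTheory.integral_divergence_prod_Icc_of_hasFDerivAt_off_countable_of_le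
    Q (fun z => -(P z)) Q' (fun z => -(P' z)) ((0,0) : ℝ × ℝ) ((1,1) : ℝ × ℝ)
    (by constructor <;> norm_num) ∅ Set.countable_empty hQc hPc.neg
    (fun z hz => hQd z (hXmem z (hmemIcc z hz)))
    (fun z hz => (hPd z (hXmem z (hmemIcc z hz))).neg)
    ((MeasureTheory.integrableOn_zero).congr_fun
      (fun z hz => (hkey z hz).symm) measurableSet_Icc)
  have hL : (∫ z in Icc ((0,0) : ℝ × ℝ) (1,1), (Q' z (1, 0) + (-(P' z)) (0, 1))) = 0 := by
    rw [MeasureTheory.setIntegral_congr_fun measurableSet_Icc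
      (fun z hz => hkey z hz : Set.EqOn _ (fun _ => (0:ℝ)) _)]
    simp
  have hB4 : (∫ y in (0:ℝ)..1, Q (0, y)) = 0 := by
    have : ∀ y : ℝ, Q (0, y) = 0 := by
      intro y
      show ⟪q (X (0, y)), (0:ℝ) • w⟫ = 0
      simp
    simp [this]
  have hB3 : (∫ y in (0:ℝ)..1, Q (1, y)) = segInt q b c := by
    refine intervalIntegral.integral_congr fun t _ => ?_
    show ⟪q (X (1, t)), (1:ℝ) • w⟫ = ⟪q (b + t • (c - b)), c - b⟫
    have hXe : X (1, t) = b + t • (c - b) := by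
      show a + (1:ℝ) • v + ((1:ℝ) * t) • w = b + t • (c - b)
      simp only [hv, hw, one_smul, one_mul]
      module
    rw [hXe, one_smul, hw]
  have hB2 : (∫ x in (0:ℝ)..1, -(P (x, 0))) = -(segInt q a b) := by
    rw [intervalIntegral.integral_neg, neg_inj]
    refine intervalIntegral.integral_congr fun t _ => ?_
    show ⟪q (X (t, 0)), v + (0:ℝ) • w⟫ = ⟪q (a + t • (b - a)), b - a⟫
    have hXe : X (t, 0) = a + t • (b - a) := by
      show a + t • v + (t * (0:ℝ)) • w = a + t • (b - a)
      simp only [hv, hw, mul_zero, zero_smul, add_zero]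
    rw [hXe, zero_smul, add_zero, hv]
  have hB1 : (∫ x in (0:ℝ)..1, -(P (x, 1))) = -(segInt q a c) := by
    rw [intervalIntegral.integral_neg, neg_inj]
    refine intervalIntegral.integral_congr fun t _ => ?_
    show ⟪q (X (t, 1)), v + (1:ℝ) • w⟫ = ⟪q (a + t • (c - a)), c - a⟫
    have hXe : X (t, 1) = a + t • (c - a) := by
      show a + t • v + (t * (1:ℝ)) • w = a + t • (c - a)
      simp only [hv, hw, mul_one]
      module
    have hvw : v + (1:ℝ) • w = c - a := by
      simp only [hv, hw, one_smul]
      module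
    rw [hXe, hvw]
  rw [hL] at hgreen
  simp only [hB1, hB2, hB3, hB4] at hgreen
  linarith [hgreen]

theorem segInt_self (q : E → E) (a : E) : segInt q a a = 0 := by
  simp [segInt]

theorem inner_le_segInt {U : Set E} (hUconv : Convex ℝ U) (hUopen : IsOpen U)
    {q : E → E} (hdiff : ∀ u ∈ U, DifferentiableAt ℝ q u)
    (hpos : ∀ u ∈ U, ∀ v : E, v ≠ 0 → 0 < ⟪fderiv ℝ q u v, v⟫)
    {a b : E} (ha : a ∈ U) (hb : b ∈ U) :
    ⟪q a, b - a⟫ ≤ segInt q a b ∧ (a ≠ b → ⟪q a, b - a⟫ < segInt q a b) := by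
  rcases eq_or_ne a b with rfl | hab
  · simp [segInt_self]
  set d : E := b - a with hd
  have hdne : d ≠ 0 := sub_ne_zero.mpr (Ne.symm hab)
  set g : ℝ → ℝ := fun t => ⟪q (a + t • d), d⟫ with hg
  have hseg : ∀ t ∈ Icc (0:ℝ) 1, a + t • d ∈ U := fun t ht =>
    hUconv.add_smul_sub_mem ha hb ht
  have hg' : ∀ t ∈ Icc (0:ℝ) 1, HasDerivAt g ⟪fderiv ℝ q (a + t • d) d, d⟫ t := by
    intro t ht
    have hγ : HasDerivAt (fun t : ℝ => a + t • d) d t := by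
      simpa using (((hasDerivAt_id t).smul_const d).const_add a)
    have hq : HasFDerivAt q (fderiv ℝ q (a + t • d)) (a + t • d) :=
      (hdiff _ (hseg t ht)).hasFDerivAt
    have hcomp : HasDerivAt (fun t : ℝ => q (a + t • d)) (fderiv ℝ q (a + t • d) d) t :=
      hq.comp_hasDerivAt t hγ
    simpa using HasDerivAt.inner ℝ hcomp (hasDerivAt_const t d)
  have hgc : ContinuousOn g (Icc (0:ℝ) 1) := fun t ht =>
    ((hg' t ht).continuousAt).continuousWithinAt
  have hmono : StrictMonoOn g (Icc (0:ℝ) 1) := by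
    refine strictMonoOn_of_deriv_pos (convex_Icc 0 1) hgc ?_
    intro t ht
    rw [interior_Icc] at ht
    rw [(hg' t ⟨ht.1.le, ht.2.le⟩).deriv]
    exact hpos _ (hseg t ⟨ht.1.le, ht.2.le⟩) d hdne
  have h01 : (0:ℝ) ∈ Icc (0:ℝ) 1 := by norm_num
  have h11 : (1:ℝ) ∈ Icc (0:ℝ) 1 := by norm_num
  have hlt : (∫ t in (0:ℝ)..1, g 0) < ∫ t in (0:ℝ)..1, g t := by
    refine intervalIntegral.integral_lt_integral_of_continuousOn_of_le_of_exists_lt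
      one_pos continuousOn_const hgc ?_ ?_
    · intro t ht
      exact (hmono h01 ⟨ht.1.le, ht.2⟩ ht.1).le
    · exact ⟨1, h11, hmono h01 h11 one_pos⟩
  have hconst : (∫ t in (0:ℝ)..1, g 0) = g 0 := by simp
  have hg0 : g 0 = ⟪q a, b - a⟫ := by simp [hg, hd]
  have hsegInt : segInt q a b = ∫ t in (0:ℝ)..1, g t := rfl
  constructor
  · rw [hsegInt, ← hg0, ← hconst]; exact hlt.le
  · intro _; rw [hsegInt, ← hg0, ← hconst]; exact hlt

end Stmt1Aux

open Stmt1Aux in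
theorem stmt1 {p : ℕ} (U : Set (EuclideanSpace ℝ (Fin p)))
    (hUconv : Convex ℝ U) (hUopen : IsOpen U)
    (q : EuclideanSpace ℝ (Fin p) → EuclideanSpace ℝ (Fin p))
    (hdiff : ∀ u ∈ U, DifferentiableAt ℝ q u)
    (hsym : ∀ u ∈ U, ∀ v w : EuclideanSpace ℝ (Fin p),
      ⟪fderiv ℝ q u v, w⟫ = ⟪v, fderiv ℝ q u w⟫)
    (hpos : ∀ u ∈ U, ∀ v : EuclideanSpace ℝ (Fin p), v ≠ 0 →
      0 < ⟪fderiv ℝ q u v, v⟫)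
    (k : ℕ) (hk : 0 < k) (u : ℕ → EuclideanSpace ℝ (Fin p))
    (hu : ∀ i ≤ k, u i ∈ U) (hcyc : u k = u 0) :
    (∑ i ∈ Finset.range k, ⟪u (i + 1) - u i, q (u i)⟫) ≤ 0 ∧
    ((∃ i < k, u i ≠ u 0) →
      (∑ i ∈ Finset.range k, ⟪u (i + 1) - u i, q (u i)⟫) < 0) := by
  have hsum0 : ∑ i ∈ Finset.range k, segInt q (u i) (u (i + 1)) = 0 := by
    have htel : ∀ i ∈ Finset.range k,
        segInt q (u i) (u (i + 1)) =
          segInt q (u 0) (u (i + 1)) - segInt q (u 0) (u i) := by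
      intro i hi
      rw [Finset.mem_range] at hi
      have h := segInt_triangle hUconv hUopen hdiff hsym
        (hu 0 (by omega)) (hu i (by omega)) (hu (i + 1) (by omega))
      linarith
    rw [Finset.sum_congr rfl htel,
      Finset.sum_range_sub (fun i => segInt q (u 0) (u i)) k, hcyc, segInt_self, sub_zero]
  have hterm : ∀ i ∈ Finset.range k,
      ⟪u (i + 1) - u i, q (u i)⟫ ≤ segInt q (u i) (u (i + 1)) := by
    intro i hi
    rw [Finset.mem_range] at hi
    rw [real_inner_comm]
    exact (inner_le_segInt hUconv hUopen hdiff hpos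
      (hu i (by omega)) (hu (i + 1) (by omega))).1
  constructor
  · calc (∑ i ∈ Finset.range k, ⟪u (i + 1) - u i, q (u i)⟫)
        ≤ ∑ i ∈ Finset.range k, segInt q (u i) (u (i + 1)) :=
          Finset.sum_le_sum hterm
      _ = 0 := hsum0
  · rintro ⟨i, hik, hine⟩
    have hex : ∃ j, j < k ∧ u j ≠ u (j + 1) := by
      by_contra h
      push_neg at h
      have hall : ∀ m, m ≤ k → u m = u 0 := by
        intro m
        induction m with
        | zero => intro _; rfl
        | succ n ih =>
          intro hn
          rw [← h n (by omega)]
          exact ih (by omega)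
      exact hine (hall i hik.le)
    obtain ⟨j, hjk, hjne⟩ := hex
    have hstrict : ⟪u (j + 1) - u j, q (u j)⟫ < segInt q (u j) (u (j + 1)) := by
      rw [real_inner_comm]
      exact (inner_le_segInt hUconv hUopen hdiff hpos
        (hu j (by omega)) (hu (j + 1) (by omega))).2 hjne
    calc (∑ i ∈ Finset.range k, ⟪u (i + 1) - u i, q (u i)⟫)
        < ∑ i ∈ Finset.range k, segInt q (u i) (u (i + 1)) := by
          refine Finset.sum_lt_sum hterm ⟨j, Finset.mem_range.mpr hjk, hstrict⟩
      _ = 0 := hsum0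
end

section
/- Let U ⊂ ℝ^p be convex open and q : U → ℝ^p be differentiable with symmetric positive definite derivative on U. Then q is injective on U. -/
open scoped RealInnerProductSpace

theorem stmt2 {p : ℕ} (U : Set (EuclideanSpace ℝ (Fin p)))
    (hUconv : Convex ℝ U) (hUopen : IsOpen U)
    (q : EuclideanSpace ℝ (Fin p) → EuclideanSpace ℝ (Fin p))
    (hdiff : ∀ u ∈ U, DifferentiableAt ℝ q u)
    (hsym : ∀ u ∈ U, ∀ v w : EuclideanSpace ℝ (Fin p),
      ⟪fderiv ℝ q u v, w⟫ = ⟪v, fderiv ℝ q u w⟫)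
    (hpos : ∀ u ∈ U, ∀ v : EuclideanSpace ℝ (Fin p), v ≠ 0 →
      0 < ⟪fderiv ℝ q u v, v⟫) :
    Set.InjOn q U := by
  intro x hx y hy hxy
  by_contra hne
  set d : EuclideanSpace ℝ (Fin p) := y - x with hd
  have hd0 : d ≠ 0 := sub_ne_zero.mpr (Ne.symm hne)
  set γ : ℝ → EuclideanSpace ℝ (Fin p) := fun t => x + t • d with hγ
  have hγmem : ∀ t ∈ Set.Icc (0:ℝ) 1, γ t ∈ U := by
    intro t ht
    have h := hUconv hx hy (by linarith [ht.2] : (0:ℝ) ≤ 1 - t) ht.1 (by ring)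
    have : (1 - t) • x + t • y = γ t := by
      simp only [hγ, hd]
      module
    rwa [this] at h
  have hγd : ∀ t : ℝ, HasDerivAt γ d t := by
    intro t
    simpa [hγ] using ((hasDerivAt_id t).smul_const d).const_add x
  set φ : ℝ → ℝ := fun t => ⟪d, q (γ t)⟫ with hφdef
  have hφ : ∀ t ∈ Set.Icc (0:ℝ) 1,
      HasDerivAt φ ⟪d, fderiv ℝ q (γ t) d⟫ t := by
    intro t ht
    have h1 : HasDerivAt (fun t => q (γ t)) (fderiv ℝ q (γ t) d) t :=
      ((hdiff _ (hγmem t ht)).hasFDerivAt).comp_hasDerivAt t (hγd t)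
    have h2 := ((innerSL ℝ d).hasFDerivAt.comp_hasDerivAt t h1)
    simpa [hφdef, Function.comp_def] using h2
  have hmono : StrictMonoOn φ (Set.Icc (0:ℝ) 1) := by
    apply strictMonoOn_of_deriv_pos (convex_Icc 0 1)
    · intro t ht
      exact (hφ t ht).continuousAt.continuousWithinAt
    · intro t ht
      rw [interior_Icc] at ht
      have ht' : t ∈ Set.Icc (0:ℝ) 1 := ⟨ht.1.le, ht.2.le⟩
      rw [(hφ t ht').deriv]
      rw [real_inner_comm]
      exact hpos _ (hγmem t ht') d hd0
  have h01 : φ 0 < φ 1 :=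
    hmono (Set.left_mem_Icc.mpr zero_le_one) (Set.right_mem_Icc.mpr zero_le_one)
      zero_lt_one
  have hγ0 : γ 0 = x := by simp [hγ]
  have hγ1 : γ 1 = y := by simp [hγ, hd]
  rw [hφdef] at h01
  simp only [hγ0, hγ1, hxy] at h01
  exact lt_irrefl _ h01
end

section
/- Let U ⊂ ℝ^p be compact convex, q : U → ℝ^p continuous, differentiable on the interior of U with symmetric positive definite derivative there, and suppose the image Y := q(U) is convex. Then for every u in the interior of U, q(u) lies in the interior of Y. -/
open scoped RealInnerProductSpace

/-- Supporting hyperplane: if `Y` is convex in a finite-dimensional real inner product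
space, `x ∈ Y` but `x ∉ interior Y`, then there is a nonzero `v` with
`⟪v, y⟫ ≤ ⟪v, x⟫` for all `y ∈ Y`. -/
lemma supporting_hyperplane {E : Type*} [NormedAddCommGroup E] [InnerProductSpace ℝ E]
    [FiniteDimensional ℝ E] {Y : Set E} (hY : Convex ℝ Y) {x : E} (hx : x ∈ Y)
    (hx' : x ∉ interior Y) :
    ∃ v : E, v ≠ 0 ∧ ∀ y ∈ Y, ⟪v, y⟫ ≤ ⟪v, x⟫ := by
  by_cases htop : affineSpan ℝ Y = ⊤
  · -- interior is nonempty; separate `x` from the open convex set `interior Y`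
    obtain ⟨a, ha⟩ : (interior Y).Nonempty :=
      hY.interior_nonempty_iff_affineSpan_eq_top.mpr htop
    obtain ⟨f, hf⟩ := geometric_hahn_banach_open_point hY.interior isOpen_interior hx'
    have hfne : f ≠ 0 := by
      intro h0
      have := hf a ha
      rw [h0] at this
      simp at this
    refine ⟨(InnerProductSpace.toDual ℝ E).symm f, ?_, ?_⟩
    · simp only [ne_eq, LinearIsometryEquiv.map_eq_zero_iff]
      exact_mod_cast fun h => hfne (by ext z; simp [show (f : E →L[ℝ] ℝ) = 0 from h])
    · intro y hy
      rw [InnerProductSpace.toDual_symm_apply, InnerProductSpace.toDual_symm_apply]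
      -- approximate `y` along the segment towards `a`
      have hseg : ∀ t : ℝ, t ∈ Set.Ioc (0:ℝ) 1 → f (y + t • (a - y)) < f x := fun t ht =>
        hf _ (hY.add_smul_sub_mem_interior hy ha ht)
      have htend : Filter.Tendsto (fun t : ℝ => f (y + t • (a - y)))
          (nhdsWithin 0 (Set.Ioi 0)) (nhds (f y)) := by
        have hc : Continuous fun t : ℝ => f (y + t • (a - y)) := by fun_prop
        have := hc.tendsto 0
        simp only [zero_smul, add_zero] at this
        exact this.mono_left nhdsWithin_le_nhds
      refine le_of_tendsto htend ?_
      filter_upwards [Ioo_mem_nhdsGT_of_mem (Set.mem_Ico.mpr ⟨le_refl 0, one_pos⟩)] with t ht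
      exact (hseg t ⟨ht.1, ht.2.le⟩).le
  · -- `Y` lies in a proper affine subspace; take a normal vector
    set W := (affineSpan ℝ Y).direction with hW
    have hWne : W ≠ ⊤ := by
      intro h
      apply htop
      have hxmem : x ∈ affineSpan ℝ Y := subset_affineSpan ℝ Y hx
      exact AffineSubspace.direction_eq_top_iff_of_nonempty ⟨x, hxmem⟩ |>.mp h
    have : Wᗮ ≠ ⊥ := fun h => hWne (Submodule.orthogonal_eq_bot_iff.mp h)
    obtain ⟨v, hvW, hv0⟩ := Submodule.exists_mem_ne_zero_of_ne_bot this
    refine ⟨v, hv0, fun y hy => ?_⟩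
    have hsub : y - x ∈ W := by
      have := AffineSubspace.vsub_mem_direction (subset_affineSpan ℝ Y hy)
        (subset_affineSpan ℝ Y hx)
      simpa using this
    have : ⟪v, y - x⟫ = 0 := Submodule.inner_left_of_mem_orthogonal hsub hvW
    rw [inner_sub_right] at this
    linarith

theorem stmt3 {p : ℕ} (U : Set (EuclideanSpace ℝ (Fin p)))
    (hUcomp : IsCompact U) (hUconv : Convex ℝ U)
    (q : EuclideanSpace ℝ (Fin p) → EuclideanSpace ℝ (Fin p))
    (hcont : ContinuousOn q U)
    (hdiff : ∀ u ∈ interior U, DifferentiableAt ℝ q u)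
    (hsym : ∀ u ∈ interior U, ∀ v w : EuclideanSpace ℝ (Fin p),
      ⟪fderiv ℝ q u v, w⟫ = ⟪v, fderiv ℝ q u w⟫)
    (hpos : ∀ u ∈ interior U, ∀ v : EuclideanSpace ℝ (Fin p), v ≠ 0 →
      0 < ⟪fderiv ℝ q u v, v⟫)
    (hYconv : Convex ℝ (q '' U)) :
    ∀ u ∈ interior U, q u ∈ interior (q '' U) := by
  intro u hu
  by_contra hq
  have huY : q u ∈ q '' U := ⟨u, interior_subset hu, rfl⟩
  obtain ⟨v, hv0, hvle⟩ := supporting_hyperplane hYconv huY hq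
  set L := fderiv ℝ q u with hL
  have hc : 0 < ⟪v, L v⟫ := by
    rw [real_inner_comm]; exact hpos u hu v hv0
  -- the curve t ↦ u + t • v
  have hcurve : HasDerivAt (fun t : ℝ => u + t • v) v 0 := by
    simpa using ((hasDerivAt_id (0:ℝ)).smul_const v).const_add u
  have hqd : HasFDerivAt q L u := (hdiff u hu).hasFDerivAt
  have hcomp : HasDerivAt (fun t : ℝ => q (u + t • v)) (L v) 0 := by
    have h0 : (fun t : ℝ => u + t • v) 0 = u := by simp
    exact (h0 ▸ hqd).comp_hasDerivAt 0 hcurve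
  set φ : ℝ → ℝ := fun t => ⟪v, q (u + t • v)⟫ with hφdef
  have hφ : HasDerivAt φ ⟪v, L v⟫ 0 := by
    have := (innerSL ℝ v).hasFDerivAt.comp_hasDerivAt 0 hcomp
    simpa [hφdef, Function.comp_def] using this
  -- ball around u inside interior U
  obtain ⟨ε, hε, hball⟩ := Metric.isOpen_iff.mp isOpen_interior u hu
  have hvpos : (0:ℝ) < ‖v‖ := norm_pos_iff.mpr hv0
  have hδ : (0:ℝ) < ε / ‖v‖ := div_pos hε hvpos
  rw [hasDerivAt_iff_tendsto_slope] at hφ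
  have hev : ∀ᶠ t in nhdsWithin 0 ({(0:ℝ)}ᶜ), 0 < slope φ 0 t :=
    hφ.eventually (eventually_gt_nhds hc)
  have hev' : ∀ᶠ t in nhdsWithin 0 (Set.Ioi (0:ℝ)), 0 < slope φ 0 t :=
    hev.filter_mono (nhdsWithin_mono 0 (fun t ht => ne_of_gt ht))
  have hsm : Set.Ioo (0:ℝ) (ε / ‖v‖) ∈ nhdsWithin 0 (Set.Ioi (0:ℝ)) :=
    Ioo_mem_nhdsGT_of_mem (Set.mem_Ico.mpr ⟨le_refl 0, hδ⟩)
  obtain ⟨t, hts, ht⟩ := (hev'.and (Filter.eventually_mem_set.mpr hsm)).exists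
  obtain ⟨ht0, htε⟩ := ht
  -- φ t > φ 0
  have hφpos : φ 0 < φ t := by
    have := mul_pos hts ht0
    rw [slope_def_field, sub_zero, div_mul_cancel₀ _ (ne_of_gt ht0)] at this
    linarith
  have hφ0 : φ 0 = ⟪v, q u⟫ := by simp [hφdef]
  -- but u + t • v ∈ U, so φ t ≤ φ 0
  have hmem : u + t • v ∈ U := by
    apply interior_subset
    apply hball
    rw [Metric.mem_ball, dist_eq_norm]
    have : ‖u + t • v - u‖ = t * ‖v‖ := by
      simp [norm_smul, abs_of_pos ht0]
    rw [this]
    calc t * ‖v‖ < (ε / ‖v‖) * ‖v‖ := by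
          exact mul_lt_mul_of_pos_right htε hvpos
      _ = ε := div_mul_cancel₀ ε (ne_of_gt hvpos)
  have : φ t ≤ φ 0 := by
    rw [hφ0]
    exact hvle _ ⟨u + t • v, hmem, rfl⟩
  linarith
end

section
/- Let (A, ‖·‖_A) and (B, ‖·‖_B) be normed spaces, A₀ ⊂ A, Z a finite index set, and φ_z : A₀ → B with φ_z(a*) = b_z for a* ∈ A₀. Let T¹ := {δa/‖δa‖ : δa ≠ 0, a* + δa ∈ A₀}. Suppose (i) each φ_z is uniformly directionally differentiable at a* with derivative map (φ_z)' : T¹ → B (Assumption of differentiability), and (ii) inf_{h ∈ T¹} ∑_{z} ‖(φ_z)'(h)‖_B > 0. Then a* is a locally unique solution of the system φ_z(a) = b_z for all z: there is ε > 0 such that no a ∈ A₀ with 0 < ‖a − a*‖_A < ε solves the system. -/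
theorem stmt6 {A B Z : Type*} [NormedAddCommGroup A] [NormedSpace ℝ A]
    [NormedAddCommGroup B] [NormedSpace ℝ B] [Fintype Z]
    (A₀ : Set A) (astar : A) (hastar : astar ∈ A₀)
    (φ : Z → A → B) (b : Z → B) (hsol : ∀ z, φ z astar = b z)
    (Dφ : Z → A → B)
    (hdiff : ∀ z : Z, ∀ δ > (0 : ℝ), ∃ ε > (0 : ℝ), ∀ t : ℝ, 0 < t → t < ε →
      ∀ h : A, (∃ a ∈ A₀, a ≠ astar ∧ h = ‖a - astar‖⁻¹ • (a - astar)) →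
        astar + t • h ∈ A₀ →
        ‖t⁻¹ • (φ z (astar + t • h) - φ z astar) - Dφ z h‖ ≤ δ)
    (hfullrank : ∃ c > (0 : ℝ), ∀ h : A,
      (∃ a ∈ A₀, a ≠ astar ∧ h = ‖a - astar‖⁻¹ • (a - astar)) →
      c ≤ ∑ z : Z, ‖Dφ z h‖) :
    ∃ ε > (0 : ℝ), ∀ a ∈ A₀, a ≠ astar → ‖a - astar‖ < ε → ∃ z : Z, φ z a ≠ b z := by
  obtain ⟨c, hc, hfr⟩ := hfullrank
  by_cases hZ : Nonempty Z
  · have hn : 0 < (Fintype.card Z : ℝ) := by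
      exact_mod_cast Fintype.card_pos
    set δ := c / (2 * Fintype.card Z) with hδdef
    have hδ : 0 < δ := by positivity
    choose ε hε hbound using fun z => hdiff z δ hδ
    have huniv : (Finset.univ : Finset Z).Nonempty := Finset.univ_nonempty
    refine ⟨Finset.univ.inf' huniv ε, ?_, ?_⟩
    · rw [gt_iff_lt, Finset.lt_inf'_iff]
      exact fun z _ => hε z
    · intro a ha hne hlt
      by_contra hcon
      push_neg at hcon
      set t := ‖a - astar‖ with ht
      have htpos : 0 < t := norm_sub_pos_iff.mpr hne
      set h := t⁻¹ • (a - astar) with hh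
      have hth : astar + t • h = a := by
        rw [hh, smul_inv_smul₀ (ne_of_gt htpos)]
        abel
      have hmem : ∃ a' ∈ A₀, a' ≠ astar ∧ h = ‖a' - astar‖⁻¹ • (a' - astar) :=
        ⟨a, ha, hne, rfl⟩
      have hb : ∀ z : Z, ‖Dφ z h‖ ≤ δ := by
        intro z
        have := hbound z t htpos (lt_of_lt_of_le hlt (Finset.inf'_le _ (Finset.mem_univ z)))
          h hmem (by rw [hth]; exact ha)
        rw [hth, hcon z, hsol z, sub_self, smul_zero, zero_sub, norm_neg] at this
        exact this
      have hsum : ∑ z : Z, ‖Dφ z h‖ ≤ (Fintype.card Z : ℝ) * δ := by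
        calc ∑ z : Z, ‖Dφ z h‖ ≤ ∑ _z : Z, δ := Finset.sum_le_sum (fun z _ => hb z)
          _ = (Fintype.card Z : ℝ) * δ := by
            rw [Finset.sum_const, Finset.card_univ, nsmul_eq_mul]
      have hcl := hfr h hmem
      have : (Fintype.card Z : ℝ) * δ = c / 2 := by
        field_simp [hδdef]
        rw [hδdef]
        field_simp
      linarith
  · refine ⟨1, one_pos, ?_⟩
    intro a ha hne _
    exfalso
    have hcl := hfr _ ⟨a, ha, hne, rfl⟩
    have : IsEmpty Z := not_nonempty_iff.mp hZ
    rw [Finset.univ_eq_empty, Finset.sum_empty] at hcl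
    linarith
end

section
/- Let C₀, C₁ be symmetric positive definite p×p matrices whose eigenvalues all lie in an interval [ℓ, L] with 0 < ℓ ≤ L, and let f₀₀, f₀₁, f₁₀, f₁₁ ≥ 0 be nonnegative reals satisfying 4 f₀₀ f₁₁ > (L/ℓ)² (f₀₁ + f₁₀)². Then for all (ξ₀, ξ₁) ∈ ℝ^p × ℝ^p not both zero, f₀₀ ξ₀ᵀC₀ξ₀ + f₀₁ ξ₀ᵀC₀ξ₁ + f₁₀ ξ₁ᵀC₁ξ₀ + f₁₁ ξ₁ᵀC₁ξ₁ > 0. -/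
set_option maxHeartbeats 800000
open Matrix

lemma my_dp_self_nonneg {p : ℕ} (v : Fin p → ℝ) : 0 ≤ v ⬝ᵥ v := by
  simp only [dotProduct]
  exact Finset.sum_nonneg fun i _ => mul_self_nonneg _

lemma my_cs {p : ℕ} (C : Matrix (Fin p) (Fin p) ℝ) (hs : C.IsSymm)
    (hnn : ∀ ξ : Fin p → ℝ, 0 ≤ ξ ⬝ᵥ (C *ᵥ ξ)) (x y : Fin p → ℝ) :
    (x ⬝ᵥ (C *ᵥ y)) ^ 2 ≤ (x ⬝ᵥ (C *ᵥ x)) * (y ⬝ᵥ (C *ᵥ y)) := by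
  have hsym : y ⬝ᵥ (C *ᵥ x) = x ⬝ᵥ (C *ᵥ y) := by
    rw [dotProduct_mulVec, ← mulVec_transpose, hs.eq]
    exact dotProduct_comm _ _
  have key : ∀ t : ℝ, 0 ≤ (y ⬝ᵥ (C *ᵥ y)) * (t * t) + (2 * (x ⬝ᵥ (C *ᵥ y))) * t
      + (x ⬝ᵥ (C *ᵥ x)) := by
    intro t
    have h := hnn (x + t • y)
    simp only [mulVec_add, mulVec_smul, dotProduct_add, add_dotProduct,
      dotProduct_smul, smul_dotProduct, smul_eq_mul, hsym] at h
    nlinarith [h]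
  have hd := discrim_le_zero key
  rw [discrim] at hd
  nlinarith [hd]

theorem stmt10 {p : ℕ} (C₀ C₁ : Matrix (Fin p) (Fin p) ℝ)
    (hs₀ : C₀.IsSymm) (hs₁ : C₁.IsSymm) (hpd₀ : C₀.PosDef) (hpd₁ : C₁.PosDef)
    (l L : ℝ) (hl : 0 < l) (hlL : l ≤ L)
    (hC₀l : ∀ ξ : Fin p → ℝ, l * (ξ ⬝ᵥ ξ) ≤ ξ ⬝ᵥ (C₀ *ᵥ ξ))
    (hC₀L : ∀ ξ : Fin p → ℝ, ξ ⬝ᵥ (C₀ *ᵥ ξ) ≤ L * (ξ ⬝ᵥ ξ))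
    (hC₁l : ∀ ξ : Fin p → ℝ, l * (ξ ⬝ᵥ ξ) ≤ ξ ⬝ᵥ (C₁ *ᵥ ξ))
    (hC₁L : ∀ ξ : Fin p → ℝ, ξ ⬝ᵥ (C₁ *ᵥ ξ) ≤ L * (ξ ⬝ᵥ ξ))
    (f₀₀ f₀₁ f₁₀ f₁₁ : ℝ)
    (h₀₀ : 0 ≤ f₀₀) (h₀₁ : 0 ≤ f₀₁) (h₁₀ : 0 ≤ f₁₀) (h₁₁ : 0 ≤ f₁₁)
    (hkey : 4 * f₀₀ * f₁₁ > (L / l) ^ 2 * (f₀₁ + f₁₀) ^ 2)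
    (ξ₀ ξ₁ : Fin p → ℝ) (hne : ¬ (ξ₀ = 0 ∧ ξ₁ = 0)) :
    0 < f₀₀ * (ξ₀ ⬝ᵥ (C₀ *ᵥ ξ₀)) + f₀₁ * (ξ₀ ⬝ᵥ (C₀ *ᵥ ξ₁)) +
        f₁₀ * (ξ₁ ⬝ᵥ (C₁ *ᵥ ξ₀)) + f₁₁ * (ξ₁ ⬝ᵥ (C₁ *ᵥ ξ₁)) := by
  have hL : 0 < L := lt_of_lt_of_le hl hlL
  set n0 := ξ₀ ⬝ᵥ ξ₀ with hn0
  set n1 := ξ₁ ⬝ᵥ ξ₁ with hn1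
  have hn0nn : 0 ≤ n0 := my_dp_self_nonneg ξ₀
  have hn1nn : 0 ≤ n1 := my_dp_self_nonneg ξ₁
  have hsum : 0 < n0 + n1 := by
    rcases not_and_or.mp hne with h | h
    · have : 0 < n0 := lt_of_le_of_ne hn0nn fun he =>
        h ((dotProduct_self_eq_zero).mp he.symm)
      linarith
    · have : 0 < n1 := lt_of_le_of_ne hn1nn fun he =>
        h ((dotProduct_self_eq_zero).mp he.symm)
      linarith
  have hnn₀ : ∀ ξ : Fin p → ℝ, 0 ≤ ξ ⬝ᵥ (C₀ *ᵥ ξ) := fun ξ =>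
    le_trans (mul_nonneg hl.le (my_dp_self_nonneg ξ)) (hC₀l ξ)
  have hnn₁ : ∀ ξ : Fin p → ℝ, 0 ≤ ξ ⬝ᵥ (C₁ *ᵥ ξ) := fun ξ =>
    le_trans (mul_nonneg hl.le (my_dp_self_nonneg ξ)) (hC₁l ξ)
  set s := Real.sqrt (n0 * n1) with hsdef
  have hs_nn : 0 ≤ s := Real.sqrt_nonneg _
  have hs_sq : s ^ 2 = n0 * n1 := Real.sq_sqrt (mul_nonneg hn0nn hn1nn)
  have hLs : 0 ≤ L * s := mul_nonneg hL.le hs_nn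
  have hc01 : (ξ₀ ⬝ᵥ (C₀ *ᵥ ξ₁)) ^ 2 ≤ (L * s) ^ 2 := by
    have h := my_cs C₀ hs₀ hnn₀ ξ₀ ξ₁
    have h2 : (ξ₀ ⬝ᵥ (C₀ *ᵥ ξ₀)) * (ξ₁ ⬝ᵥ (C₀ *ᵥ ξ₁)) ≤ (L * n0) * (L * n1) :=
      mul_le_mul (hC₀L ξ₀) (hC₀L ξ₁) (hnn₀ ξ₁) (mul_nonneg hL.le hn0nn)
    have h3 : (L * s) ^ 2 = L ^ 2 * (n0 * n1) := by rw [mul_pow, hs_sq]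
    nlinarith [h, h2, h3]
  have hc10 : (ξ₁ ⬝ᵥ (C₁ *ᵥ ξ₀)) ^ 2 ≤ (L * s) ^ 2 := by
    have h := my_cs C₁ hs₁ hnn₁ ξ₁ ξ₀
    have h2 : (ξ₁ ⬝ᵥ (C₁ *ᵥ ξ₁)) * (ξ₀ ⬝ᵥ (C₁ *ᵥ ξ₀)) ≤ (L * n1) * (L * n0) :=
      mul_le_mul (hC₁L ξ₁) (hC₁L ξ₀) (hnn₁ ξ₀) (mul_nonneg hL.le hn1nn)
    have h3 : (L * s) ^ 2 = L ^ 2 * (n0 * n1) := by rw [mul_pow, hs_sq]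
    nlinarith [h, h2, h3]
  have hb01 : -(L * s) ≤ ξ₀ ⬝ᵥ (C₀ *ᵥ ξ₁) := by nlinarith [hc01, hLs]
  have hb10 : -(L * s) ≤ ξ₁ ⬝ᵥ (C₁ *ᵥ ξ₀) := by nlinarith [hc10, hLs]
  have hq0 : l * n0 ≤ ξ₀ ⬝ᵥ (C₀ *ᵥ ξ₀) := hC₀l ξ₀
  have hq1 : l * n1 ≤ ξ₁ ⬝ᵥ (C₁ *ᵥ ξ₁) := hC₁l ξ₁
  have hkey' : L ^ 2 * (f₀₁ + f₁₀) ^ 2 < 4 * f₀₀ * f₁₁ * l ^ 2 := by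
    have h := hkey
    rw [div_pow] at h
    have hl2 : (0:ℝ) < l ^ 2 := by positivity
    calc L ^ 2 * (f₀₁ + f₁₀) ^ 2 = L ^ 2 / l ^ 2 * (f₀₁ + f₁₀) ^ 2 * l ^ 2 := by
          field_simp
      _ < 4 * f₀₀ * f₁₁ * l ^ 2 := mul_lt_mul_of_pos_right h hl2
  have hf00 : 0 < f₀₀ := by
    rcases lt_or_eq_of_le h₀₀ with h | h
    · exact h
    · exfalso; nlinarith [sq_nonneg (L * (f₀₁ + f₁₀))]
  have hf11 : 0 < f₁₁ := by
    rcases lt_or_eq_of_le h₁₁ with h | h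
    · exact h
    · exfalso; nlinarith [sq_nonneg (L * (f₀₁ + f₁₀))]
  have hmain : (f₀₁ + f₁₀) * (L * s) < f₀₀ * (l * n0) + f₁₁ * (l * n1) := by
    rcases eq_or_lt_of_le hs_nn with hs0 | hs0
    · -- s = 0, so n0 * n1 = 0 and one of n0, n1 is positive
      have hprod : n0 * n1 = 0 := by rw [← hs_sq, ← hs0]; ring
      rw [← hs0]
      rcases mul_eq_zero.mp hprod with h | h
      · have hn1pos : 0 < n1 := by rw [h] at hsum; simpa using hsum
        nlinarith [mul_pos (mul_pos hf11 hl) hn1pos,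
          mul_nonneg (mul_pos hf00 hl).le hn0nn]
      · have hn0pos : 0 < n0 := by rw [h] at hsum; simpa using hsum
        nlinarith [mul_pos (mul_pos hf00 hl) hn0pos,
          mul_nonneg (mul_pos hf11 hl).le hn1nn]
    · -- s > 0
      have hs2 : 0 < s ^ 2 := by positivity
      have hstrict : L ^ 2 * (f₀₁ + f₁₀) ^ 2 * s ^ 2 < 4 * f₀₀ * f₁₁ * l ^ 2 * s ^ 2 :=
        mul_lt_mul_of_pos_right hkey' hs2
      have hprodpos : 0 < n0 * n1 := by rw [← hs_sq]; exact hs2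
      obtain ⟨hn0pos, hn1pos⟩ : 0 < n0 ∧ 0 < n1 := by
        rcases mul_pos_iff.mp hprodpos with ⟨ha, hb⟩ | ⟨ha, hb⟩
        · exact ⟨ha, hb⟩
        · exact absurd ha (not_lt.mpr hn0nn)
      have hApos : 0 < f₀₀ * (l * n0) := mul_pos hf00 (mul_pos hl hn0pos)
      have hBpos : 0 < f₁₁ * (l * n1) := mul_pos hf11 (mul_pos hl hn1pos)
      have hR : 0 ≤ (f₀₁ + f₁₀) * (L * s) := mul_nonneg (add_nonneg h₀₁ h₁₀) hLs
      have hstrict2 : ((f₀₁ + f₁₀) * (L * s)) ^ 2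
          < 4 * (f₀₀ * (l * n0)) * (f₁₁ * (l * n1)) := by
        calc ((f₀₁ + f₁₀) * (L * s)) ^ 2 = L ^ 2 * (f₀₁ + f₁₀) ^ 2 * s ^ 2 := by ring
          _ < 4 * f₀₀ * f₁₁ * l ^ 2 * s ^ 2 := hstrict
          _ = 4 * f₀₀ * f₁₁ * l ^ 2 * (n0 * n1) := by rw [hs_sq]
          _ = 4 * (f₀₀ * (l * n0)) * (f₁₁ * (l * n1)) := by ring
      nlinarith [hstrict2, sq_nonneg (f₀₀ * (l * n0) - f₁₁ * (l * n1)), hApos, hBpos, hR]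
  have e00 := mul_le_mul_of_nonneg_left hq0 h₀₀
  have e11 := mul_le_mul_of_nonneg_left hq1 h₁₁
  have e01 := mul_le_mul_of_nonneg_left hb01 h₀₁
  have e10 := mul_le_mul_of_nonneg_left hb10 h₁₀
  nlinarith [hmain, e00, e11, e01, e10]
end

section
/- Let q : U → ℝ^p be C² on an open set U ⊂ ℝ^p with Dq(u) invertible, let f : ℝ^p → ℝ be C¹, and h : U → ℝ^p be C¹. Then div( f(q(u)) · det(Dq(u)) · (Dq(u))^{-1} h(u) ) = det(Dq(u)) · ⟨∇f(q(u)), h(u)⟩ + f(q(u)) · ⟨cof(Dq(u)), Dh(u)⟩, where cof(C) = det(C) C^{-1} and ⟨A, B⟩ = ∑_{i,j} A_{ij} B_{ij}. -/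
open Matrix

/-- The Jacobian matrix of a map `g : ℝ^p → ℝ^p` at `u`:
`(jacobian g u) i j = ∂ g_i / ∂ u_j`. -/
noncomputable def jacobian {p : ℕ} (g : (Fin p → ℝ) → (Fin p → ℝ))
    (u : Fin p → ℝ) : Matrix (Fin p) (Fin p) ℝ :=
  Matrix.of fun i j => fderiv ℝ g u (Pi.single j 1) i

/-- The cofactor matrix `cof C = det C • C⁻¹`. -/
noncomputable def cofactor {p : ℕ} (C : Matrix (Fin p) (Fin p) ℝ) :
    Matrix (Fin p) (Fin p) ℝ :=
  C.det • C⁻¹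

noncomputable def detCM (p : ℕ) : ContinuousMultilinearMap ℝ (fun _ : Fin p => (Fin p → ℝ)) ℝ :=
  MultilinearMap.mkContinuous (Matrix.detRowAlternating (R := ℝ) (n := Fin p)).toMultilinearMap
    (Nat.factorial p) (by
      intro m
      show ‖(Matrix.of m).det‖ ≤ _
      rw [Matrix.det_apply]
      calc ‖∑ σ : Equiv.Perm (Fin p), Equiv.Perm.sign σ • ∏ i, Matrix.of m (σ i) i‖
          ≤ ∑ σ : Equiv.Perm (Fin p), ‖Equiv.Perm.sign σ • ∏ i, Matrix.of m (σ i) i‖ :=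
            norm_sum_le _ _
        _ ≤ ∑ σ : Equiv.Perm (Fin p), ∏ i, ‖m i‖ := by
            apply Finset.sum_le_sum
            intro σ _
            have : ‖Equiv.Perm.sign σ • ∏ i, Matrix.of m (σ i) i‖
                = ‖∏ i, m (σ i) i‖ := by
              rcases Int.units_eq_one_or (Equiv.Perm.sign σ) with h | h <;>
                simp [h, Units.smul_def]
            rw [this]
            calc ‖∏ i, m (σ i) i‖ = ∏ i, ‖m (σ i) i‖ := by
                  rw [Real.norm_eq_abs, Finset.abs_prod]; rfl
              _ ≤ ∏ i, ‖m (σ i)‖ := by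
                  apply Finset.prod_le_prod (fun _ _ => norm_nonneg _)
                  intro i _; exact norm_le_pi_norm (m (σ i)) i
              _ = ∏ i, ‖m i‖ := Equiv.prod_comp σ (fun i => ‖m i‖)
        _ = (Nat.factorial p) * ∏ i, ‖m i‖ := by
            rw [Finset.sum_const, Finset.card_univ, Fintype.card_perm, nsmul_eq_mul]
            simp)

lemma detCM_apply {p : ℕ} (m : Fin p → (Fin p → ℝ)) : detCM p m = (Matrix.of m).det := rfl

lemma det_rows_hasFDerivAt {p : ℕ} {g : Fin p → (Fin p → ℝ) → (Fin p → ℝ)}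
    {g' : Fin p → (Fin p → ℝ) →L[ℝ] (Fin p → ℝ)} {u : Fin p → ℝ}
    (hg : ∀ k, HasFDerivAt (g k) (g' k) u) :
    ∃ L : (Fin p → ℝ) →L[ℝ] ℝ,
      HasFDerivAt (fun v => (Matrix.of fun k => g k v).det) L u ∧
      ∀ w, L w = ∑ k, ((Matrix.of fun k' => g k' u).updateRow k (g' k w)).det := by
  refine ⟨_, HasFDerivAt.multilinear_comp (f := detCM p) hg, ?_⟩
  intro w
  simp only [ContinuousLinearMap.sum_apply, ContinuousLinearMap.comp_apply,
    ContinuousMultilinearMap.toContinuousLinearMap_apply]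
  rfl

lemma det_updateRow_expand {p : ℕ} (M : Matrix (Fin p) (Fin p) ℝ) (k : Fin p) (r : Fin p → ℝ) :
    (M.updateRow k r).det = ∑ l, r l * (M.updateRow k (Pi.single l 1)).det := by
  have hr : r = ∑ l, r l • (Pi.single l 1 : Fin p → ℝ) := by
    ext j
    simp [Pi.single_apply]
  rw [← Matrix.cramer_transpose_apply]
  conv_lhs => rw [hr]
  rw [map_sum]
  simp only [Finset.sum_apply, LinearMap.map_smul, Pi.smul_apply, smul_eq_mul]
  congr 1
  ext l
  rw [Matrix.cramer_transpose_apply]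

lemma det_swap_updateRow {p : ℕ} (D : Matrix (Fin p) (Fin p) ℝ) {j k : Fin p} (hjk : k ≠ j)
    (a b : Fin p → ℝ) :
    ((D.updateRow j a).updateRow k b).det = - ((D.updateRow j b).updateRow k a).det := by
  have h := Matrix.det_permute (Equiv.swap j k) ((D.updateRow j b).updateRow k a)
  have heq : ((D.updateRow j b).updateRow k a).submatrix (Equiv.swap j k) id
      = (D.updateRow j a).updateRow k b := by
    ext r l
    rcases eq_or_ne r j with rfl | hrj
    · simp [Matrix.submatrix_apply, Equiv.swap_apply_left, Matrix.updateRow_apply, hjk,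
        (Ne.symm hjk)]
    · rcases eq_or_ne r k with rfl | hrk
      · simp [Matrix.submatrix_apply, Equiv.swap_apply_right, Matrix.updateRow_apply, hjk,
          Ne.symm hjk]
      · simp [Matrix.submatrix_apply, Equiv.swap_apply_of_ne_of_ne hrj hrk,
          Matrix.updateRow_apply, hrj, hrk]
  rw [heq, Equiv.Perm.sign_swap (Ne.symm hjk)] at h
  rw [h]; push_cast; ring

lemma sum_antisymm {p : ℕ} {f : Fin p → Fin p → ℝ} (h : ∀ i l, f i l = - f l i) :
    (∑ i, ∑ l, f i l) = 0 := by
  have h2 : (∑ i, ∑ l, f i l) = - ∑ i, ∑ l, f i l := by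
    conv_lhs => rw [Finset.sum_comm]
    have : ∀ l, (∑ i, f i l) = -∑ i, f l i := by
      intro l
      rw [← Finset.sum_neg_distrib]
      exact Finset.sum_congr rfl fun i _ => h i l
    rw [Finset.sum_congr rfl fun l _ => this l, ← Finset.sum_neg_distrib]
  linarith

lemma piola {p : ℕ} (D : Matrix (Fin p) (Fin p) ℝ) (B : Fin p → Matrix (Fin p) (Fin p) ℝ)
    (hB : ∀ i k l, B i k l = B l k i) (j : Fin p) :
    ∑ i, ∑ k, ((D.updateRow j (Pi.single i 1)).updateRow k
        (if k = j then 0 else B i k)).det = 0 := by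
  rw [Finset.sum_comm]
  apply Finset.sum_eq_zero
  intro k _
  rcases eq_or_ne k j with rfl | hkj
  · apply Finset.sum_eq_zero
    intro i _
    simp only [if_pos rfl]
    exact Matrix.det_eq_zero_of_row_eq_zero k (fun l => by simp)
  · simp only [if_neg hkj]
    have hexp : ∀ i : Fin p, ((D.updateRow j (Pi.single i 1)).updateRow k (B i k)).det
        = ∑ l, B i k l * ((D.updateRow j (Pi.single i 1)).updateRow k (Pi.single l 1)).det :=
      fun i => det_updateRow_expand _ k (B i k)
    rw [Finset.sum_congr rfl fun i _ => hexp i]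
    apply sum_antisymm
    intro i l
    have h1 : ((D.updateRow j (Pi.single i 1)).updateRow k (Pi.single l 1)).det
        = - ((D.updateRow j (Pi.single l 1)).updateRow k (Pi.single i 1)).det :=
      det_swap_updateRow D hkj _ _
    rw [hB i k l, h1]
    ring

lemma clm_apply_expand {p : ℕ} (F : (Fin p → ℝ) →L[ℝ] ℝ) (x : Fin p → ℝ) :
    F x = ∑ k, x k * F (Pi.single k 1) := by
  have hx : x = ∑ k, x k • (Pi.single k 1 : Fin p → ℝ) := by
    ext j; simp [Pi.single_apply]
  conv_lhs => rw [hx]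
  rw [map_sum]
  simp

lemma cofactor_eq_adjugate {p : ℕ} (M : Matrix (Fin p) (Fin p) ℝ) (hM : IsUnit M.det) :
    cofactor M = M.adjugate := by
  rw [cofactor, Matrix.inv_def, smul_smul, Ring.mul_inverse_cancel _ hM, one_smul]


lemma final_algebra {p : ℕ} (c d : ℝ) (F' hv : Fin p → ℝ) (a Dh' L' D : Fin p → Fin p → ℝ)
    (hL : ∀ j, ∑ i, L' i j = 0)
    (hDa : ∀ k j, ∑ i, D k i * a i j = d * (if k = j then 1 else 0)) :
    ∑ i, (c * (∑ j, (a i j * Dh' i j + hv j * L' i j))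
        + (∑ j, a i j * hv j) * (∑ k, D k i * F' k))
    = d * (∑ i, F' i * hv i) + c * ∑ i, ∑ j, a i j * Dh' i j := by
  have expand : ∀ i, c * (∑ j, (a i j * Dh' i j + hv j * L' i j))
        + (∑ j, a i j * hv j) * (∑ k, D k i * F' k)
      = (∑ j, c * (a i j * Dh' i j)) + (∑ j, c * (hv j * L' i j))
        + ∑ j, ∑ k, (a i j * hv j) * (D k i * F' k) := by
    intro i
    rw [Finset.sum_add_distrib, mul_add, Finset.mul_sum, Finset.mul_sum, Finset.sum_mul]
    congr 1
    apply Finset.sum_congr rfl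
    intro j _
    rw [Finset.mul_sum]
  rw [Finset.sum_congr rfl fun i _ => expand i, Finset.sum_add_distrib, Finset.sum_add_distrib]
  have h2 : ∑ i, ∑ j, c * (hv j * L' i j) = 0 := by
    rw [Finset.sum_comm]
    apply Finset.sum_eq_zero
    intro j _
    rw [← Finset.mul_sum, ← Finset.mul_sum, hL j, mul_zero, mul_zero]
  have h3 : ∑ i, ∑ j, ∑ k, (a i j * hv j) * (D k i * F' k) = d * ∑ i, F' i * hv i := by
    rw [Finset.sum_comm]
    rw [Finset.sum_congr rfl fun j (_ : j ∈ Finset.univ) =>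
      (Finset.sum_comm (s := Finset.univ) (t := Finset.univ)
        (f := fun i k => (a i j * hv j) * (D k i * F' k)))]
    have hinner : ∀ j k, ∑ i, (a i j * hv j) * (D k i * F' k)
        = hv j * F' k * (d * (if k = j then 1 else 0)) := by
      intro j k
      rw [← hDa k j, Finset.mul_sum]
      apply Finset.sum_congr rfl
      intro i _
      ring
    rw [Finset.sum_congr rfl fun j (_ : j ∈ Finset.univ) => Finset.sum_congr rfl
      fun k (_ : k ∈ Finset.univ) => hinner j k]
    rw [Finset.mul_sum]
    apply Finset.sum_congr rfl
    intro j _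
    rw [Finset.sum_eq_single j]
    · simp [mul_comm, mul_assoc]
    · intro k _ hk
      simp [hk]
    · intro hj
      exact absurd (Finset.mem_univ j) hj
  rw [h2, h3, add_zero, add_comm]
  congr 1
  rw [Finset.mul_sum]
  apply Finset.sum_congr rfl
  intro i _
  rw [Finset.mul_sum]

theorem stmt12 {p : ℕ} (U : Set (Fin p → ℝ)) (hU : IsOpen U)
    (q h : (Fin p → ℝ) → (Fin p → ℝ)) (f : (Fin p → ℝ) → ℝ)
    (hq : ContDiffOn ℝ 2 q U)
    (hinv : ∀ u ∈ U, IsUnit (jacobian q u).det)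
    (hf : ContDiff ℝ 1 f) (hh : ContDiffOn ℝ 1 h U)
    (u : Fin p → ℝ) (hu : u ∈ U) :
    (∑ i, fderiv ℝ
        (fun v => f (q v) * (jacobian q v).det * (((jacobian q v)⁻¹) *ᵥ h v) i)
        u (Pi.single i 1))
    = (jacobian q u).det * (∑ i, fderiv ℝ f (q u) (Pi.single i 1) * h u i)
      + f (q u) * ∑ i, ∑ j,
          cofactor (jacobian q u) i j * fderiv ℝ h u (Pi.single i 1) j := by
  classical
  have hnhds : U ∈ nhds u := hU.mem_nhds hu
  have hqd : DifferentiableAt ℝ q u := (hq.contDiffAt hnhds).differentiableAt (by norm_num)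
  have hhd : DifferentiableAt ℝ h u := (hh.contDiffAt hnhds).differentiableAt one_ne_zero
  have hqU : ContDiffOn ℝ 1 (fderiv ℝ q) U := hq.fderiv_of_isOpen hU (by norm_num)
  have hΦd : DifferentiableAt ℝ (fderiv ℝ q) u := (hqU.contDiffAt hnhds).differentiableAt one_ne_zero
  set Φ : (Fin p → ℝ) →L[ℝ] ((Fin p → ℝ) →L[ℝ] (Fin p → ℝ)) := fderiv ℝ (fderiv ℝ q) u with hΦdef
  have hΦ : HasFDerivAt (fderiv ℝ q) Φ u := hΦd.hasFDerivAt
  set D := jacobian q u with hDdef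
  set B : Fin p → Matrix (Fin p) (Fin p) ℝ :=
    fun i => Matrix.of fun k l => Φ (Pi.single i 1) (Pi.single l 1) k with hBdef
  have hBsymm : ∀ i k l, B i k l = B l k i := by
    intro i k l
    have hsym := (hq.contDiffAt hnhds).isSymmSndFDerivAt (by simp [minSmoothness_of_isRCLikeNormedField])
    have h2 := hsym (Pi.single i 1) (Pi.single l 1)
    exact congrFun h2 k
  set Ψ : Fin p → (((Fin p → ℝ) →L[ℝ] (Fin p → ℝ)) →L[ℝ] (Fin p → ℝ)) := fun k =>
    ContinuousLinearMap.pi (fun l => (ContinuousLinearMap.proj k).comp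
      (ContinuousLinearMap.apply ℝ (Fin p → ℝ) (Pi.single l 1))) with hΨdef
  have hRow : ∀ k, HasFDerivAt (fun v => jacobian q v k) ((Ψ k).comp Φ) u := by
    intro k
    exact ((Ψ k).hasFDerivAt.comp u hΦ)
  have hΨB : ∀ k i, (Ψ k) (Φ (Pi.single i 1)) = B i k := by
    intro k i
    ext l
    rfl
  -- adjugate entries are differentiable with computable directional derivative
  have hadj : ∀ i j : Fin p, ∃ L : (Fin p → ℝ) →L[ℝ] ℝ,
      HasFDerivAt (fun v => (jacobian q v).adjugate i j) L u ∧
      L (Pi.single i 1) = ∑ k, ((D.updateRow j (Pi.single i 1)).updateRow k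
          (if k = j then 0 else B i k)).det := by
    intro i j
    have hgk : ∀ k, HasFDerivAt
        (fun v => Function.update (fun k' => jacobian q v k') j (Pi.single i 1) k)
        (if k = j then 0 else (Ψ k).comp Φ) u := by
      intro k
      rcases eq_or_ne k j with rfl | hkj
      · simp only [Function.update_self, if_pos rfl]
        exact hasFDerivAt_const _ _
      · simp only [Function.update_of_ne hkj, if_neg hkj]
        exact hRow k
    obtain ⟨L, hL, hLw⟩ := det_rows_hasFDerivAt hgk
    refine ⟨L, ?_, ?_⟩
    · have heq : (fun v => (jacobian q v).adjugate i j)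
          = fun v => (Matrix.of fun k =>
              Function.update (fun k' => jacobian q v k') j (Pi.single i 1) k).det := by
        funext v
        rw [Matrix.adjugate_apply]
        rfl
      rw [heq]
      exact hL
    · rw [hLw]
      apply Finset.sum_congr rfl
      intro k _
      have h1 : (Matrix.of fun k' => Function.update (fun k' => jacobian q u k') j
          (Pi.single i 1) k') = D.updateRow j (Pi.single i 1) := rfl
      have h2 : ((if k = j then 0 else (Ψ k).comp Φ) :
          (Fin p → ℝ) →L[ℝ] (Fin p → ℝ)) (Pi.single i 1)
          = (if k = j then 0 else B i k) := by
        rcases eq_or_ne k j with rfl | hkj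
        · simp
        · simp only [if_neg hkj, ContinuousLinearMap.comp_apply]
          exact hΨB k i
      rw [h1, h2]
  choose Ladj hLadj hLadjval using hadj
  have hfq : HasFDerivAt (fun v => f (q v)) ((fderiv ℝ f (q u)).comp (fderiv ℝ q u)) u :=
    ((hf.differentiable one_ne_zero (q u)).hasFDerivAt).comp u hqd.hasFDerivAt
  have hhj : ∀ j, HasFDerivAt (fun v => h v j)
      ((ContinuousLinearMap.proj j).comp (fderiv ℝ h u)) u :=
    fun j => (ContinuousLinearMap.proj (R := ℝ) (φ := fun _ : Fin p => ℝ)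
      j).hasFDerivAt.comp u hhd.hasFDerivAt
  set G : Fin p → (Fin p → ℝ) → ℝ :=
    fun i v => f (q v) * ∑ j, (jacobian q v).adjugate i j * h v j with hGdef
  have hGder : ∀ i, HasFDerivAt (G i)
      (f (q u) • (∑ j, ((jacobian q u).adjugate i j •
          ((ContinuousLinearMap.proj j).comp (fderiv ℝ h u)) + h u j • Ladj i j))
        + (∑ j, (jacobian q u).adjugate i j * h u j)
          • ((fderiv ℝ f (q u)).comp (fderiv ℝ q u))) u := by
    intro i
    exact hfq.mul (HasFDerivAt.fun_sum fun j _ => (hLadj i j).mul (hhj j))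
  have hFG : ∀ i, (fun v => f (q v) * (jacobian q v).det * (((jacobian q v)⁻¹) *ᵥ h v) i)
      =ᶠ[nhds u] G i := by
    intro i
    filter_upwards [hnhds] with v hv
    have hdet := hinv v hv
    have hinvmat : (jacobian q v).det • (jacobian q v)⁻¹ = (jacobian q v).adjugate := by
      rw [Matrix.inv_def, smul_smul, Ring.mul_inverse_cancel _ hdet, one_smul]
    have hmv : (jacobian q v).det * (((jacobian q v)⁻¹) *ᵥ h v) i
        = ((jacobian q v).adjugate *ᵥ h v) i := by
      rw [← hinvmat, Matrix.smul_mulVec]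
      simp
    calc f (q v) * (jacobian q v).det * (((jacobian q v)⁻¹) *ᵥ h v) i
        = f (q v) * ((jacobian q v).det * (((jacobian q v)⁻¹) *ᵥ h v) i) := by ring
      _ = f (q v) * ((jacobian q v).adjugate *ᵥ h v) i := by rw [hmv]
      _ = G i v := by
          simp [hGdef, Matrix.mulVec, dotProduct]
  have key : ∀ i, fderiv ℝ (fun v => f (q v) * (jacobian q v).det
      * (((jacobian q v)⁻¹) *ᵥ h v) i) u (Pi.single i 1)
      = f (q u) * (∑ j, (D.adjugate i j * fderiv ℝ h u (Pi.single i 1) j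
            + h u j * Ladj i j (Pi.single i 1)))
        + (∑ j, D.adjugate i j * h u j)
          * (∑ k, D k i * fderiv ℝ f (q u) (Pi.single k 1)) := by
    intro i
    rw [(hFG i).fderiv_eq, (hGder i).fderiv]
    simp only [ContinuousLinearMap.add_apply, ContinuousLinearMap.smul_apply,
      ContinuousLinearMap.sum_apply, ContinuousLinearMap.coe_comp', Function.comp_apply,
      ContinuousLinearMap.proj_apply, smul_eq_mul]
    rw [clm_apply_expand (fderiv ℝ f (q u)) (fderiv ℝ q u (Pi.single i 1))]
    rfl
  rw [Finset.sum_congr rfl fun i (_ : i ∈ Finset.univ) => key i]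
  have hpiola : ∀ j, ∑ i, Ladj i j (Pi.single i 1) = 0 := by
    intro j
    rw [Finset.sum_congr rfl fun i (_ : i ∈ Finset.univ) => hLadjval i j]
    exact piola D B hBsymm j
  have hDa : ∀ k j, ∑ i, D k i * D.adjugate i j = D.det * (if k = j then 1 else 0) := by
    intro k j
    have := congrFun (congrFun (Matrix.mul_adjugate D) k) j
    rw [Matrix.mul_apply] at this
    rw [this]
    simp [Matrix.smul_apply, Matrix.one_apply]
  rw [final_algebra (f (q u)) D.det (fun k => fderiv ℝ f (q u) (Pi.single k 1)) (h u)
    (fun i j => D.adjugate i j) (fun i j => fderiv ℝ h u (Pi.single i 1) j)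
    (fun i j => Ladj i j (Pi.single i 1)) (fun k i => D k i) hpiola hDa]
  congr 1
  rw [cofactor_eq_adjugate D (hinv u hu)]
end

section
/- Piola's identity: if q : U → ℝ^p is C² on an open set U ⊂ ℝ^p with invertible Jacobian Dq, then each column of the cofactor matrix is divergence-free: for every j, ∑_{i=1}^p ∂/∂u_i [cof(Dq(u))]_{ij} = 0. -/
open Matrix

lemma cof_entry {p : ℕ} (A : Matrix (Fin p) (Fin p) ℝ) (h : IsUnit A.det) (i j : Fin p) :
    cofactor A i j =
      ∑ σ ∈ Finset.univ.filter (fun σ : Equiv.Perm (Fin p) => σ i = j),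
        ((Equiv.Perm.sign σ : ℤ) : ℝ) * ∏ k ∈ Finset.univ.erase i, A (σ k) k := by
  have h1 : cofactor A = A.adjugate := by
    show A.det • A⁻¹ = _
    rw [Matrix.inv_def, smul_smul, Ring.mul_inverse_cancel _ h, one_smul]
  rw [h1, Matrix.adjugate_apply, Matrix.det_apply']
  rw [← Finset.sum_filter_add_sum_filter_not Finset.univ
    (fun σ : Equiv.Perm (Fin p) => σ i = j)]
  have h2 : ∀ σ ∈ Finset.univ.filter (fun σ : Equiv.Perm (Fin p) => ¬ σ i = j),
      ((Equiv.Perm.sign σ : ℤ) : ℝ) * ∏ k, (A.updateRow j (Pi.single i 1)) (σ k) k = 0 := by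
    intro σ hσ
    rw [Finset.mem_filter] at hσ
    have hne : σ.symm j ≠ i := fun hcon => hσ.2 (by rw [← hcon, Equiv.apply_symm_apply])
    have hz : (A.updateRow j (Pi.single i 1)) (σ (σ.symm j)) (σ.symm j) = 0 := by
      rw [Equiv.apply_symm_apply, Matrix.updateRow_self, Pi.single_eq_of_ne hne]
    exact mul_eq_zero_of_right _ (Finset.prod_eq_zero (Finset.mem_univ (σ.symm j)) hz)
  rw [Finset.sum_eq_zero h2, add_zero]
  refine Finset.sum_congr rfl fun σ hσ => ?_
  rw [Finset.mem_filter] at hσ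
  rw [← Finset.mul_prod_erase _ _ (Finset.mem_univ i), hσ.2, Matrix.updateRow_self,
    Pi.single_eq_same, one_mul]
  congr 1
  refine Finset.prod_congr rfl fun k hk => ?_
  have hkj : σ k ≠ j := fun hc => (Finset.mem_erase.mp hk).1 (σ.injective (hc.trans hσ.2.symm))
  rw [Matrix.updateRow_ne hkj]

section aux
variable {p : ℕ} (q : (Fin p → ℝ) → (Fin p → ℝ)) (u : Fin p → ℝ)

/-- entries of the jacobian as scalar functions -/
noncomputable def pa (k l : Fin p) (v : Fin p → ℝ) : ℝ :=
  fderiv ℝ q v (Pi.single l 1) k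

/-- the evaluation CLM `L ↦ L (single l 1) m` -/
noncomputable def phi (m l : Fin p) :
    ((Fin p → ℝ) →L[ℝ] (Fin p → ℝ)) →L[ℝ] ℝ :=
  (ContinuousLinearMap.proj m).comp (ContinuousLinearMap.apply ℝ (Fin p → ℝ) (Pi.single l 1))

lemma pa_eq_phi (m l : Fin p) : pa q m l = fun v => phi m l (fderiv ℝ q v) := rfl

/-- second partials -/
noncomputable def pb (m l i : Fin p) : ℝ :=
  fderiv ℝ (pa q m l) u (Pi.single i 1)

variable {q u} {U : Set (Fin p → ℝ)} (hU : IsOpen U) (hq : ContDiffOn ℝ 2 q U) (hu : u ∈ U)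

include hU hq hu

lemma haD (m l : Fin p) :
    HasFDerivAt (pa q m l)
      ((phi m l).comp (fderiv ℝ (fun w => fderiv ℝ q w) u)) u := by
  have hdq : ContDiffOn ℝ 1 (fun v => fderiv ℝ q v) U := hq.fderiv_of_isOpen hU (by norm_num)
  have h1 : DifferentiableAt ℝ (fun v => fderiv ℝ q v) u :=
    (hdq.contDiffAt (hU.mem_nhds hu)).differentiableAt one_ne_zero
  exact ((phi m l).hasFDerivAt.comp u h1.hasFDerivAt)

lemma pb_symm (m l i : Fin p) : pb q u m l i = pb q u m i l := by
  have hdq : ContDiffOn ℝ 1 (fun v => fderiv ℝ q v) U := hq.fderiv_of_isOpen hU (by norm_num)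
  have h1 : DifferentiableAt ℝ (fun v => fderiv ℝ q v) u :=
    (hdq.contDiffAt (hU.mem_nhds hu)).differentiableAt one_ne_zero
  have hev : ∀ᶠ y in nhds u, HasFDerivAt q (fderiv ℝ q y) y := by
    filter_upwards [hU.mem_nhds hu] with y hy
    exact ((hq.contDiffAt (hU.mem_nhds hy)).differentiableAt two_ne_zero).hasFDerivAt
  have hsymm := second_derivative_symmetric_of_eventually_of_real hev h1.hasFDerivAt
  have e1 : pb q u m l i
      = fderiv ℝ (fun w => fderiv ℝ q w) u (Pi.single i 1) (Pi.single l 1) m := by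
    rw [pb, (haD hU hq hu m l).fderiv]; rfl
  have e2 : pb q u m i l
      = fderiv ℝ (fun w => fderiv ℝ q w) u (Pi.single l 1) (Pi.single i 1) m := by
    rw [pb, (haD hU hq hu m i).fderiv]; rfl
  rw [e1, e2, hsymm]

end aux

section aux2
variable {p : ℕ} (q : (Fin p → ℝ) → (Fin p → ℝ)) (u : Fin p → ℝ)

noncomputable def pc (j i : Fin p) (σ : Equiv.Perm (Fin p)) (l : Fin p) : ℝ :=
  ((Equiv.Perm.sign σ : ℤ) : ℝ) *
    ((∏ k ∈ (Finset.univ.erase i).erase l, pa q (σ k) k u) * pb q u (σ l) l i)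

variable {q u} {U : Set (Fin p → ℝ)} (hU : IsOpen U) (hq : ContDiffOn ℝ 2 q U) (hu : u ∈ U)

include hU hq hu

lemma key_lemma (hinv : ∀ v ∈ U, IsUnit (jacobian q v).det) (j i : Fin p) :
    fderiv ℝ (fun v => cofactor (jacobian q v) i j) u (Pi.single i 1)
      = ∑ σ ∈ Finset.univ.filter (fun σ : Equiv.Perm (Fin p) => σ i = j),
          ∑ l ∈ Finset.univ.erase i, pc q u j i σ l := by
  classical
  have heq : (fun v => cofactor (jacobian q v) i j) =ᶠ[nhds u]
      (fun v => ∑ σ ∈ Finset.univ.filter (fun σ : Equiv.Perm (Fin p) => σ i = j),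
        ((Equiv.Perm.sign σ : ℤ) : ℝ) * ∏ k ∈ Finset.univ.erase i, pa q (σ k) k v) := by
    filter_upwards [hU.mem_nhds hu] with v hv
    exact cof_entry _ (hinv v hv) i j
  rw [heq.fderiv_eq]
  have hsum : HasFDerivAt
      (fun v => ∑ σ ∈ Finset.univ.filter (fun σ : Equiv.Perm (Fin p) => σ i = j),
        ((Equiv.Perm.sign σ : ℤ) : ℝ) * ∏ k ∈ Finset.univ.erase i, pa q (σ k) k v)
      (∑ σ ∈ Finset.univ.filter (fun σ : Equiv.Perm (Fin p) => σ i = j),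
        ((Equiv.Perm.sign σ : ℤ) : ℝ) •
          (∑ l ∈ Finset.univ.erase i,
            (∏ k ∈ (Finset.univ.erase i).erase l, pa q (σ k) k u) •
              ((phi (σ l) l).comp (fderiv ℝ (fun w => fderiv ℝ q w) u)))) u := by
    refine HasFDerivAt.fun_sum fun σ _ => ?_
    exact (HasFDerivAt.finset_prod fun l _ => haD hU hq hu (σ l) l).const_mul _
  rw [hsum.fderiv]
  simp only [ContinuousLinearMap.coe_sum', Finset.sum_apply, ContinuousLinearMap.coe_smul',
    Pi.smul_apply, smul_eq_mul, Finset.mul_sum]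
  refine Finset.sum_congr rfl fun σ _ => Finset.sum_congr rfl fun l _ => ?_
  simp only [pc, pb]
  rw [(haD hU hq hu (σ l) l).fderiv]

lemma pair_lemma (j i : Fin p) (σ : Equiv.Perm (Fin p)) (l : Fin p) (hl : l ≠ i) :
    pc q u j i σ l + pc q u j l (σ * Equiv.swap i l) i = 0 := by
  have h1 : ((Equiv.Perm.sign (σ * Equiv.swap i l) : ℤ) : ℝ)
      = -((Equiv.Perm.sign σ : ℤ) : ℝ) := by
    rw [Equiv.Perm.sign_mul, Equiv.Perm.sign_swap (Ne.symm hl)]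
    simp [Units.val_mul]
  have h3 : (σ * Equiv.swap i l) i = σ l := by
    simp [Equiv.Perm.mul_apply, Equiv.swap_apply_left]
  have h2 : ∏ k ∈ (Finset.univ.erase l).erase i, pa q ((σ * Equiv.swap i l) k) k u
      = ∏ k ∈ (Finset.univ.erase i).erase l, pa q (σ k) k u := by
    rw [Finset.erase_right_comm]
    refine Finset.prod_congr rfl fun k hk => ?_
    have hkl : k ≠ l := (Finset.mem_erase.mp hk).1
    have hki : k ≠ i := (Finset.mem_erase.mp (Finset.mem_of_mem_erase hk)).1
    rw [Equiv.Perm.mul_apply, Equiv.swap_apply_of_ne_of_ne hki hkl]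
  have h4 : pb q u ((σ * Equiv.swap i l) i) i l = pb q u (σ l) l i := by
    rw [h3]; exact (pb_symm hU hq hu _ _ _).symm
  simp only [pc]
  rw [h1, h2, h4]
  ring

end aux2

/-- Piola's identity: each column of the cofactor matrix of the Jacobian of a
`C²` map with invertible Jacobian is divergence-free. -/
theorem stmt13 {p : ℕ} (U : Set (Fin p → ℝ)) (hU : IsOpen U)
    (q : (Fin p → ℝ) → (Fin p → ℝ))
    (hq : ContDiffOn ℝ 2 q U)
    (hinv : ∀ u ∈ U, IsUnit (jacobian q u).det)
    (u : Fin p → ℝ) (hu : u ∈ U) (j : Fin p) :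
    ∑ i, fderiv ℝ (fun v => cofactor (jacobian q v) i j) u (Pi.single i 1) = 0 := by
  classical
  have h0 : (∑ i, fderiv ℝ (fun v => cofactor (jacobian q v) i j) u (Pi.single i 1))
      = ∑ i : Fin p, ∑ σ ∈ Finset.univ.filter (fun σ : Equiv.Perm (Fin p) => σ i = j),
          ∑ l ∈ Finset.univ.erase i, pc q u j i σ l :=
    Finset.sum_congr rfl fun i _ => key_lemma hU hq hu hinv j i
  rw [h0]
  have hconv : (∑ i : Fin p, ∑ σ ∈ Finset.univ.filter
        (fun σ : Equiv.Perm (Fin p) => σ i = j),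
          ∑ l ∈ Finset.univ.erase i, pc q u j i σ l)
      = ∑ x ∈ Finset.univ.filter
          (fun x : Fin p × Equiv.Perm (Fin p) × Fin p => x.2.1 x.1 = j ∧ x.2.2 ≠ x.1),
          pc q u j x.1 x.2.1 x.2.2 := by
    rw [Finset.sum_filter, Fintype.sum_prod_type]
    refine Finset.sum_congr rfl fun i _ => ?_
    rw [Fintype.sum_prod_type, Finset.sum_filter]
    refine Finset.sum_congr rfl fun σ _ => ?_
    by_cases h : σ i = j
    · simp only [h, if_true, true_and]
      rw [← Finset.filter_ne', Finset.sum_filter]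
    · simp [h]
  rw [hconv]
  refine Finset.sum_involution
    (fun x _ => (x.2.2, x.2.1 * Equiv.swap x.1 x.2.2, x.1)) ?_ ?_ ?_ ?_
  · rintro ⟨i, σ, l⟩ hx
    simp only [Finset.mem_filter] at hx
    exact pair_lemma hU hq hu j i σ l hx.2.2
  · rintro ⟨i, σ, l⟩ hx _
    simp only [Finset.mem_filter] at hx
    intro hcon
    exact hx.2.2 (congrArg Prod.fst hcon)
  · rintro ⟨i, σ, l⟩ hx
    simp only [Finset.mem_filter] at hx ⊢
    refine ⟨Finset.mem_univ _, ?_, Ne.symm hx.2.2⟩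
    simp [Equiv.Perm.mul_apply, Equiv.swap_apply_right, hx.2.1]
  · rintro ⟨i, σ, l⟩ hx
    simp only [Prod.mk.injEq]
    refine ⟨trivial, ?_, trivial⟩
    rw [Equiv.swap_comm l i, mul_assoc, Equiv.swap_mul_self, mul_one]
end

section
/- Let (B, ‖·‖) be a normed space, φ : A₀ → B a map on a subset A₀ of a normed space A, a* ∈ A₀ with derivative map φ' on the normalized tangent set T¹ satisfying the uniform directional differentiability condition. If a ∈ A₀, a ≠ a*, ‖a − a*‖ < ε (ε from the differentiability condition with tolerance η/|Z|), and ‖φ'((a − a*)/‖a − a*‖)‖ ≥ η, then ‖φ(a) − φ(a*)‖ ≥ ‖a − a*‖ (η − η/|Z|) > 0 for |Z| ≥ 2; in particular φ(a) ≠ φ(a*). -/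
theorem stmt17 {A B : Type*} [NormedAddCommGroup A] [NormedSpace ℝ A]
    [NormedAddCommGroup B] [NormedSpace ℝ B]
    (A₀ : Set A) (astar : A) (hastar : astar ∈ A₀)
    (φ : A → B) (Dφ : A → B)
    (η : ℝ) (hη : 0 < η) (n : ℕ) (hn : 2 ≤ n)
    (ε : ℝ) (hε : 0 < ε)
    (hdiff : ∀ h : A, (∃ a ∈ A₀, a ≠ astar ∧ h = ‖a - astar‖⁻¹ • (a - astar)) →
      ∀ t : ℝ, 0 < t → t < ε → astar + t • h ∈ A₀ →
        ‖t⁻¹ • (φ (astar + t • h) - φ astar) - Dφ h‖ < η / n)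
    (a : A) (ha : a ∈ A₀) (hane : a ≠ astar) (hlt : ‖a - astar‖ < ε)
    (hD : η ≤ ‖Dφ (‖a - astar‖⁻¹ • (a - astar))‖) :
    ‖a - astar‖ * (η - η / n) ≤ ‖φ a - φ astar‖ ∧ φ a ≠ φ astar := by
  set t : ℝ := ‖a - astar‖ with ht
  have htpos : 0 < t := by
    simpa [ht] using norm_pos_iff.mpr (sub_ne_zero.mpr hane)
  set h : A := t⁻¹ • (a - astar) with hh
  have hmem : astar + t • h = a := by
    rw [hh, smul_smul, mul_inv_cancel₀ htpos.ne', one_smul]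
    abel
  have key := hdiff h ⟨a, ha, hane, rfl⟩ t htpos hlt (by rw [hmem]; exact ha)
  rw [hmem] at key
  have h1 : η - η / n ≤ ‖t⁻¹ • (φ a - φ astar)‖ := by
    have := norm_sub_norm_le (Dφ h) (t⁻¹ • (φ a - φ astar))
    rw [norm_sub_rev] at this
    linarith
  rw [norm_smul, norm_inv, Real.norm_eq_abs, abs_of_pos htpos] at h1
  have hfrac : η / n < η := by
    have : (1:ℝ) < n := by exact_mod_cast lt_of_lt_of_le one_lt_two hn
    exact div_lt_self hη this
  have hmain : t * (η - η / n) ≤ ‖φ a - φ astar‖ := by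
    rw [mul_comm]
    rw [inv_mul_eq_div] at h1; exact (le_div_iff₀ htpos).mp h1
  refine ⟨hmain, fun hcontra => ?_⟩
  rw [hcontra, sub_self, norm_zero] at hmain
  nlinarith
end
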